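/- arXiv:1708.02595 — 5 statements merged into one kernel-verified Lean document; each statement's English description precedes it below -/
import Mathlib

section
/- Let L be a linear operator on a normed vector space and ‖·‖ a norm (or seminorm). Suppose there exists Δt_FE > 0 such that ‖u + Δt L u‖ ≤ ‖u‖ for all u and all 0 ≤ Δt ≤ Δt_FE. Then ‖e^{τL} u‖ ≤ ‖u‖ for all u and all τ ≥ 0. -/
open NormedSpace Filter Topology

section helpers
variable {𝔸 : Type*} [NormedRing 𝔸] [NormedAlgebra ℝ 𝔸] [CompleteSpace 𝔸] [NormOneClass 𝔸]
set_option linter.unusedSectionVars false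


lemma my_norm_exp_le (x : 𝔸) : ‖exp x‖ ≤ Real.exp ‖x‖ := by
  have h := exp_series_hasSum_exp' (𝕂 := ℝ) x
  have hs : Summable fun n => ‖((n.factorial : ℝ)⁻¹ • x ^ n)‖ := norm_expSeries_summable' x
  calc ‖exp x‖ ≤ ∑' n : ℕ, ‖((n.factorial : ℝ)⁻¹ • x ^ n)‖ := h.tsum_eq ▸ norm_tsum_le_tsum_norm hs
    _ ≤ ∑' n : ℕ, ‖x‖ ^ n / (n.factorial : ℝ) := by
        refine Summable.tsum_le_tsum (fun n => ?_) hs (Real.summable_pow_div_factorial _)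
        rw [norm_smul, norm_inv, Real.norm_natCast, div_eq_inv_mul]
        gcongr
        exact norm_pow_le x n
    _ = Real.exp ‖x‖ := by
        rw [Real.exp_eq_exp_ℝ, exp_eq_tsum_div]

lemma my_norm_exp_sub_one_sub_le (x : 𝔸) :
    ‖exp x - 1 - x‖ ≤ ‖x‖ ^ 2 * Real.exp ‖x‖ := by
  have h := exp_series_hasSum_exp' (𝕂 := ℝ) x
  have h2 : HasSum (fun n : ℕ => ((((n+2).factorial : ℝ)))⁻¹ • x ^ (n + 2))
      (exp x - 1 - x) := by
    have := (hasSum_nat_add_iff' 2).mpr h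
    simpa [Finset.sum_range_succ, sub_sub] using this
  have hs : Summable fun n : ℕ => ‖((((n+2).factorial : ℝ)))⁻¹ • x ^ (n + 2)‖ :=
    (norm_expSeries_summable' x).comp_injective (add_left_injective 2)
  have hbig : Summable fun n : ℕ => ‖x‖ ^ 2 * (‖x‖ ^ n / (n.factorial : ℝ)) :=
    (Real.summable_pow_div_factorial ‖x‖).mul_left _
  calc ‖exp x - 1 - x‖ ≤ ∑' n : ℕ, ‖((((n+2).factorial : ℝ)))⁻¹ • x ^ (n + 2)‖ :=
        h2.tsum_eq ▸ norm_tsum_le_tsum_norm hs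
    _ ≤ ∑' n : ℕ, ‖x‖ ^ 2 * (‖x‖ ^ n / (n.factorial : ℝ)) := by
        refine Summable.tsum_le_tsum (fun n => ?_) hs hbig
        rw [norm_smul, norm_inv, Real.norm_natCast]
        calc (((n+2).factorial : ℝ))⁻¹ * ‖x ^ (n + 2)‖ ≤ ((n.factorial : ℝ))⁻¹ * ‖x‖ ^ (n + 2) := by
              exact mul_le_mul
                (inv_anti₀ (Nat.cast_pos.mpr n.factorial_pos)
                  (Nat.cast_le.mpr (Nat.factorial_le (Nat.le_add_right n 2))))
                (norm_pow_le x (n + 2)) (norm_nonneg _)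
                (inv_nonneg.mpr (Nat.cast_nonneg _))
          _ = ‖x‖ ^ 2 * (‖x‖ ^ n / (n.factorial : ℝ)) := by ring
    _ = ‖x‖ ^ 2 * Real.exp ‖x‖ := by
        rw [tsum_mul_left, Real.exp_eq_exp_ℝ, exp_eq_tsum_div]

lemma my_norm_pow_sub_pow_le {x y : 𝔸} (h : Commute x y) {M : ℝ}
    (hx : ‖x‖ ≤ M) (hy : ‖y‖ ≤ M) (hM : 0 ≤ M) (n : ℕ) :
    ‖x ^ n - y ^ n‖ ≤ n * M ^ (n - 1) * ‖x - y‖ := by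
  rw [← h.geom_sum₂_mul]
  calc ‖(∑ i ∈ Finset.range n, x ^ i * y ^ (n - 1 - i)) * (x - y)‖
      ≤ ‖∑ i ∈ Finset.range n, x ^ i * y ^ (n - 1 - i)‖ * ‖x - y‖ := norm_mul_le _ _
    _ ≤ (n * M ^ (n - 1)) * ‖x - y‖ := by
        gcongr
        calc ‖∑ i ∈ Finset.range n, x ^ i * y ^ (n - 1 - i)‖
            ≤ ∑ i ∈ Finset.range n, ‖x ^ i * y ^ (n - 1 - i)‖ := norm_sum_le _ _
          _ ≤ ∑ i ∈ Finset.range n, M ^ (n - 1) := by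
              refine Finset.sum_le_sum fun i hi => ?_
              have hin : i ≤ n - 1 := Nat.le_sub_one_of_lt (Finset.mem_range.mp hi)
              calc ‖x ^ i * y ^ (n - 1 - i)‖ ≤ ‖x ^ i‖ * ‖y ^ (n - 1 - i)‖ := norm_mul_le _ _
                _ ≤ ‖x‖ ^ i * ‖y‖ ^ (n - 1 - i) := by gcongr <;> exact norm_pow_le _ _
                _ ≤ M ^ i * M ^ (n - 1 - i) := by gcongr
                _ = M ^ (n - 1) := by rw [← pow_add]; congr 1; omega
          _ = n * M ^ (n - 1) := by simp [Finset.sum_const, mul_comm]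
end helpers

set_option maxHeartbeats 1000000 in

/-- If a bounded linear operator `L` satisfies the forward Euler condition
`‖u + Δt·Lu‖ ≤ ‖u‖` for all `0 ≤ Δt ≤ Δt_FE` (with `Δt_FE > 0`), then
`‖e^{τL} u‖ ≤ ‖u‖` for all `τ ≥ 0`. -/
theorem exp_monotone_of_forwardEuler
    {X : Type*} [NormedAddCommGroup X] [NormedSpace ℝ X] [CompleteSpace X]
    (L : X →L[ℝ] X) (ΔtFE : ℝ) (hΔtFE : 0 < ΔtFE)
    (hFE : ∀ (u : X) (Δt : ℝ), 0 ≤ Δt → Δt ≤ ΔtFE → ‖u + Δt • L u‖ ≤ ‖u‖) :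
    ∀ (u : X) (τ : ℝ), 0 ≤ τ → ‖(exp (τ • L)) u‖ ≤ ‖u‖ := by
  intro u τ hτ
  rcases subsingleton_or_nontrivial X with hX | hX
  · rw [Subsingleton.elim ((exp (τ • L)) u) u]
  -- discrete (forward Euler power) bound
  have hpow : ∀ (Δt : ℝ), 0 ≤ Δt → Δt ≤ ΔtFE → ∀ (n : ℕ) (v : X),
      ‖((1 + Δt • L) ^ n) v‖ ≤ ‖v‖ := by
    intro Δt h0 h1 n
    induction n with
    | zero => intro v; simp
    | succ n ih =>
      intro v
      have h2 : ((1 + Δt • L) ^ (n + 1)) v = ((1 + Δt • L) ^ n) ((1 + Δt • L) v) := by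
        rw [pow_succ]; rfl
      have h3 : (1 + Δt • L) v = v + Δt • L v := by
        simp [ContinuousLinearMap.add_apply]
      rw [h2]
      exact (ih _).trans (by rw [h3]; exact hFE v Δt h0 h1)
  set c : ℝ := τ * ‖L‖ with hc
  have hc0 : 0 ≤ c := mul_nonneg hτ (norm_nonneg _)
  -- key quantitative estimate
  have key : ∀ n : ℕ, 1 ≤ n →
      ‖(exp (τ • L)) u - ((1 + (τ / n) • L) ^ n) u‖ ≤ c ^ 2 * Real.exp c * ‖u‖ / n := by
    intro n hn
    have hn0 : (0:ℝ) < n := by exact_mod_cast hn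
    set y : X →L[ℝ] X := (τ / n) • L with hy
    have hyn : ‖y‖ = c / n := by
      rw [hy]
      calc ‖(τ / (n:ℝ)) • L‖ = ‖(τ / (n:ℝ))‖ * ‖L‖ := norm_smul (τ / (n:ℝ)) L
        _ = c / n := by
          rw [Real.norm_eq_abs, abs_of_nonneg (by positivity), hc, div_mul_eq_mul_div]
    have hexp : exp (τ • L) = (exp y) ^ n := by
      letI : NormedAlgebra ℚ (X →L[ℝ] X) := .restrictScalars ℚ ℝ (X →L[ℝ] X)
      rw [← exp_nsmul, ← Nat.cast_smul_eq_nsmul ℝ, hy, smul_smul,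
        mul_div_cancel₀ τ hn0.ne']
    set M : ℝ := Real.exp ‖y‖ with hM
    have hM0 : 0 ≤ M := (Real.exp_pos _).le
    have hA : ‖exp y‖ ≤ M := my_norm_exp_le y
    have hB : ‖(1 : X →L[ℝ] X) + y‖ ≤ M := by
      calc ‖(1 : X →L[ℝ] X) + y‖ ≤ ‖(1 : X →L[ℝ] X)‖ + ‖y‖ := norm_add_le _ _
        _ = ‖y‖ + 1 := by rw [norm_one, add_comm]
        _ ≤ M := Real.add_one_le_exp _
    have hcomm : Commute (exp y) (1 + y) :=
      (((Commute.one_right y).add_right (Commute.refl y)).exp_left)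
    have hAB : ‖exp y - (1 + y)‖ ≤ ‖y‖ ^ 2 * M := by
      rw [← sub_sub]
      exact my_norm_exp_sub_one_sub_le y
    calc ‖(exp (τ • L)) u - ((1 + (τ / n) • L) ^ n) u‖
        = ‖((exp y) ^ n - (1 + y) ^ n) u‖ := by
          rw [hexp, ContinuousLinearMap.sub_apply]
      _ ≤ ‖(exp y) ^ n - (1 + y) ^ n‖ * ‖u‖ := ContinuousLinearMap.le_opNorm _ _
      _ ≤ (n * M ^ (n - 1) * ‖exp y - (1 + y)‖) * ‖u‖ := by
          exact mul_le_mul_of_nonneg_right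
            (my_norm_pow_sub_pow_le hcomm hA hB hM0 n) (norm_nonneg u)
      _ ≤ (n * M ^ (n - 1) * (‖y‖ ^ 2 * M)) * ‖u‖ := by
          exact mul_le_mul_of_nonneg_right
            (mul_le_mul_of_nonneg_left hAB (by positivity)) (norm_nonneg u)
      _ = n * ‖y‖ ^ 2 * M ^ n * ‖u‖ := by
          have : M ^ (n - 1) * M = M ^ n := by
            rw [← pow_succ]
            congr 1
            omega
          rw [← this]; ring
      _ = c ^ 2 * Real.exp c * ‖u‖ / n := by
          have h1 : M ^ n = Real.exp c := by
            rw [hM, ← Real.exp_nat_mul, hyn, mul_div_cancel₀ c hn0.ne']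
          rw [h1, hyn]
          field_simp
  -- convergence of the Euler approximations
  set f : ℕ → X := fun n => ((1 + (τ / n) • L) ^ n) u with hf
  have htend : Tendsto f atTop (𝓝 ((exp (τ • L)) u)) := by
    rw [tendsto_iff_norm_sub_tendsto_zero]
    refine squeeze_zero' (.of_forall fun n => norm_nonneg _) ?_
      (tendsto_const_div_atTop_nhds_zero_nat (c ^ 2 * Real.exp c * ‖u‖))
    filter_upwards [eventually_ge_atTop 1] with n hn
    exact le_of_eq_of_le (norm_sub_rev _ _) (key n hn)
  refine le_of_tendsto htend.norm ?_
  filter_upwards [eventually_ge_atTop (max 1 ⌈τ / ΔtFE⌉₊)] with n hn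
  have hn1 : 1 ≤ n := le_of_max_le_left hn
  have hn0 : (0:ℝ) < n := by exact_mod_cast hn1
  have hτn : τ / n ≤ ΔtFE := by
    rw [div_le_iff₀ hn0]
    have h1 : τ / ΔtFE ≤ (⌈τ / ΔtFE⌉₊ : ℝ) := Nat.le_ceil _
    have h2 : (⌈τ / ΔtFE⌉₊ : ℝ) ≤ n := by exact_mod_cast le_of_max_le_right hn
    nlinarith [(div_le_iff₀ hΔtFE).mp (h1.trans h2)]
  exact hpow (τ / n) (by positivity) hτn n u
end

section
/- Suppose nonnegative reals α_{ij}, β_{ij} (for 0 ≤ j < i ≤ s) satisfy ∑_{j<i} α_{ij} = 1 for each i, with β_{ij} = 0 whenever α_{ij} = 0. Let L satisfy ‖e^{τL}u‖ ≤ ‖u‖ for all τ ≥ 0, and let N satisfy ‖u + hN(u)‖ ≤ ‖u‖ for 0 ≤ h ≤ Δt_FE. Let abscissas satisfy 0 = c_1 ≤ c_2 ≤ ... ≤ c_s. Define u^{(0)} = u^n and u^{(i)} = ∑_{j<i} e^{L(c_i − c_j)Δt}(α_{ij} u^{(j)} + Δt β_{ij} N(u^{(j)})). Then for Δt ≤ C·Δt_FE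 where C = min_{i,j: β_{ij}>0} α_{ij}/β_{ij}, every stage satisfies ‖u^{(i)}‖ ≤ ‖u^n‖; in particular ‖u^{n+1}‖ = ‖u^{(s)}‖ ≤ ‖u^n‖. -/
open NormedSpace Finset

/-- SSP property of explicit integrating factor Runge–Kutta methods in Shu–Osher
form with non-decreasing abscissas: each stage satisfies `‖u^{(i)}‖ ≤ ‖u^n‖`,
in particular `‖u^{n+1}‖ = ‖u^{(s)}‖ ≤ ‖u^n‖`. -/
theorem ssp_integrating_factor_RK
    {X : Type*} [NormedAddCommGroup X] [NormedSpace ℝ X] [CompleteSpace X]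
    (L : X →L[ℝ] X) (N : X → X) (ΔtFE : ℝ) (hΔtFE : 0 < ΔtFE)
    (hL : ∀ (v : X) (τ : ℝ), 0 ≤ τ → ‖(exp (τ • L)) v‖ ≤ ‖v‖)
    (hN : ∀ (v : X) (h : ℝ), 0 ≤ h → h ≤ ΔtFE → ‖v + h • N v‖ ≤ ‖v‖)
    (s : ℕ) (α β : ℕ → ℕ → ℝ) (c : ℕ → ℝ)
    (hα : ∀ i j, j < i → i ≤ s → 0 ≤ α i j)
    (hβ : ∀ i j, j < i → i ≤ s → 0 ≤ β i j)
    (hzero : ∀ i j, j < i → i ≤ s → α i j = 0 → β i j = 0)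
    (hconsistent : ∀ i, 1 ≤ i → i ≤ s → ∑ j ∈ range i, α i j = 1)
    (hc0 : c 0 = 0) (hcmono : ∀ j i, j ≤ i → i ≤ s → c j ≤ c i)
    (C : ℝ) (hC : 0 < C)
    (hCmin : ∀ i j, j < i → i ≤ s → 0 < β i j → C ≤ α i j / β i j)
    (Δt : ℝ) (hΔt0 : 0 ≤ Δt) (hΔt : Δt ≤ C * ΔtFE)
    (un : X) (u : ℕ → X) (hu0 : u 0 = un)
    (hstage : ∀ i, 1 ≤ i → i ≤ s →
      u i = ∑ j ∈ range i,
        (exp (((c i - c j) * Δt) • L)) (α i j • u j + (Δt * β i j) • N (u j))) :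
    (∀ i, i ≤ s → ‖u i‖ ≤ ‖un‖) ∧ ‖u s‖ ≤ ‖un‖ := by

  have key : ∀ i, i ≤ s → ‖u i‖ ≤ ‖un‖ := by
    intro i
    induction i using Nat.strong_induction_on with
    | _ i ih =>
      intro his
      rcases Nat.eq_zero_or_pos i with h0 | h1
      · subst h0; rw [hu0]
      · rw [hstage i h1 his]
        calc ‖∑ j ∈ range i,
              (exp (((c i - c j) * Δt) • L)) (α i j • u j + (Δt * β i j) • N (u j))‖
            ≤ ∑ j ∈ range i, α i j * ‖un‖ := by
              refine (norm_sum_le _ _).trans (Finset.sum_le_sum ?_)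
              intro j hj
              have hji : j < i := Finset.mem_range.mp hj
              have hτ : 0 ≤ (c i - c j) * Δt :=
                mul_nonneg (sub_nonneg.mpr (hcmono j i hji.le his)) hΔt0
              refine (hL _ _ hτ).trans ?_
              by_cases hα0 : α i j = 0
              · have hβ0 := hzero i j hji his hα0
                simp [hα0, hβ0, mul_nonneg (hα i j hji his) (norm_nonneg un)]
              · have hαpos : 0 < α i j := (hα i j hji his).lt_of_ne (Ne.symm hα0)
                have hrew : α i j • u j + (Δt * β i j) • N (u j)
                    = α i j • (u j + (Δt * β i j / α i j) • N (u j)) := by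
                  rw [smul_add, smul_smul]
                  congr 2
                  field_simp
                rw [hrew, norm_smul, Real.norm_eq_abs, abs_of_pos hαpos]
                have hnorm : ‖u j + (Δt * β i j / α i j) • N (u j)‖ ≤ ‖u j‖ := by
                  apply hN
                  · exact div_nonneg (mul_nonneg hΔt0 (hβ i j hji his)) hαpos.le
                  · rcases eq_or_lt_of_le (hβ i j hji his) with hβ0 | hβpos
                    · rw [← hβ0]; simp; exact hΔtFE.le
                    · have h1 : C * β i j ≤ α i j :=
                        (le_div_iff₀ hβpos).mp (hCmin i j hji his hβpos)
                      rw [div_le_iff₀ hαpos]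
                      nlinarith [mul_nonneg hΔtFE.le (hβ i j hji his)]
                exact mul_le_mul_of_nonneg_left
                  (hnorm.trans (ih j hji (hji.le.trans his))) hαpos.le
          _ = ‖un‖ := by rw [← Finset.sum_mul, hconsistent i h1 his, one_mul]
  exact ⟨key, key s le_rfl⟩
end

section
/- For the explicit Runge–Kutta method in Shu–Osher form u^{(i)} = ∑_{j<i}(α_{ij} u^{(j)} + Δt β_{ij} F(u^{(j)})), with all α_{ij}, β_{ij} ≥ 0, ∑_{j<i} α_{ij} = 1, and β_{ij} = 0 whenever α_{ij} = 0: if F satisfies the forward Euler condition ‖u + hF(u)‖ ≤ ‖u‖ for 0 ≤ h ≤ Δt_FE, then ‖u^{(i)}‖ ≤ ‖u^n‖ for each stage i, provided Δt ≤ (min_{i,j: β_{ij}>0} α_{ij}/β_{ij})·Δt_FE. -/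
open Finset

/-- SSP property of explicit Runge–Kutta methods in Shu–Osher form:
if `F` satisfies the forward Euler condition, then every stage satisfies
`‖u^{(i)}‖ ≤ ‖u^n‖` under the time-step restriction `Δt ≤ C·Δt_FE`
where `C = min α_{ij}/β_{ij}` over pairs with `β_{ij} > 0`. -/
theorem ssp_shu_osher_RK
    {X : Type*} [NormedAddCommGroup X] [NormedSpace ℝ X]
    (F : X → X) (ΔtFE : ℝ) (hΔtFE : 0 < ΔtFE)
    (hFE : ∀ (v : X) (h : ℝ), 0 ≤ h → h ≤ ΔtFE → ‖v + h • F v‖ ≤ ‖v‖)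
    (s : ℕ) (α β : ℕ → ℕ → ℝ)
    (hα : ∀ i j, j < i → i ≤ s → 0 ≤ α i j)
    (hβ : ∀ i j, j < i → i ≤ s → 0 ≤ β i j)
    (hzero : ∀ i j, j < i → i ≤ s → α i j = 0 → β i j = 0)
    (hconsistent : ∀ i, 1 ≤ i → i ≤ s → ∑ j ∈ range i, α i j = 1)
    (C : ℝ) (hC : 0 < C)
    (hCmin : ∀ i j, j < i → i ≤ s → 0 < β i j → C ≤ α i j / β i j)
    (Δt : ℝ) (hΔt0 : 0 ≤ Δt) (hΔt : Δt ≤ C * ΔtFE)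
    (un : X) (u : ℕ → X) (hu0 : u 0 = un)
    (hstage : ∀ i, 1 ≤ i → i ≤ s →
      u i = ∑ j ∈ range i, (α i j • u j + (Δt * β i j) • F (u j))) :
    ∀ i, i ≤ s → ‖u i‖ ≤ ‖un‖ := by
  intro i
  induction i using Nat.strong_induction_on with
  | _ i ih =>
    intro his
    match i with
    | 0 => simp [hu0]
    | (n+1) =>
      have h1 : 1 ≤ n + 1 := Nat.le_add_left 1 n
      rw [hstage (n+1) h1 his]
      calc ‖∑ j ∈ range (n+1), (α (n+1) j • u j + (Δt * β (n+1) j) • F (u j))‖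
          ≤ ∑ j ∈ range (n+1), ‖α (n+1) j • u j + (Δt * β (n+1) j) • F (u j)‖ :=
            norm_sum_le _ _
        _ ≤ ∑ j ∈ range (n+1), α (n+1) j * ‖un‖ := by
            apply Finset.sum_le_sum
            intro j hj
            have hjlt : j < n + 1 := Finset.mem_range.mp hj
            have hane := hα (n+1) j hjlt his
            have hbne := hβ (n+1) j hjlt his
            have huj : ‖u j‖ ≤ ‖un‖ := ih j hjlt (le_trans (le_of_lt hjlt) his)
            rcases eq_or_lt_of_le hane with ha0 | hapos
            · have hb0 : β (n+1) j = 0 := hzero (n+1) j hjlt his ha0.symm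
              simp [← ha0, hb0]
            · set a := α (n+1) j
              set b := β (n+1) j
              have key : α (n+1) j • u j + (Δt * β (n+1) j) • F (u j)
                  = a • (u j + (Δt * b / a) • F (u j)) := by
                rw [smul_add, smul_smul]
                congr 2
                field_simp
                rfl
              rw [key, norm_smul, Real.norm_of_nonneg hane]
              have hh0 : 0 ≤ Δt * b / a :=
                div_nonneg (mul_nonneg hΔt0 hbne) hane
              have hhle : Δt * b / a ≤ ΔtFE := by
                rcases eq_or_lt_of_le hbne with hb0 | hbpos
                · rw [← hb0]; simp; exact le_of_lt hΔtFE
                · have hCb : C * b ≤ a := by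
                    have := hCmin (n+1) j hjlt his hbpos
                    calc C * b ≤ (a / b) * b := by nlinarith
                      _ = a := by field_simp
                  rw [div_le_iff₀ hapos]
                  calc Δt * b ≤ (C * ΔtFE) * b := by nlinarith
                    _ = (C * b) * ΔtFE := by ring
                    _ ≤ ΔtFE * a := by nlinarith
              have := hFE (u j) (Δt * b / a) hh0 hhle
              calc a * ‖u j + (Δt * b / a) • F (u j)‖ ≤ a * ‖u j‖ := by
                    exact mul_le_mul_of_nonneg_left this hane
                _ ≤ a * ‖un‖ := mul_le_mul_of_nonneg_left huj hane
        _ = ‖un‖ := by rw [← Finset.sum_mul, hconsistent (n+1) h1 his, one_mul]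
end

section
/- The optimal three-stage third-order explicit SSP Runge–Kutta method with non-decreasing abscissas has SSP coefficient at most 3/4. Precisely: there is no explicit 3-stage Runge–Kutta method satisfying the third-order conditions b^T e = 1, b^T c = 1/2, b^T(c∘c) = 1/3, b^T A c = 1/6, with nonnegative Shu–Osher coefficients α_{ij}, β_{ij} satisfying α_{ij} > (3/4)β_{ij} for all i,j with β_{ij} > 0, and with non-decreasing abscissas 0 = c_1 ≤ c_2 ≤ c_3. -/
set_option maxHeartbeats 1000000 in

/-- There is no explicit 3-stage Runge–Kutta method satisfying the third-order
conditions, with nonnegative Shu–Osher coefficients satisfying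
`α_{ij} > (3/4)β_{ij}` whenever `β_{ij} > 0`, and non-decreasing abscissas
`0 = c_1 ≤ c_2 ≤ c_3`.  Hence the optimal `eSSPRK⁺(3,3)` method has SSP
coefficient at most `3/4`. -/
theorem no_eSSPRKplus33_with_C_gt_three_quarters :
    ¬ ∃ (α10 α20 α21 α30 α31 α32 β10 β20 β21 β30 β31 β32 : ℝ),
      0 ≤ α10 ∧ 0 ≤ α20 ∧ 0 ≤ α21 ∧ 0 ≤ α30 ∧ 0 ≤ α31 ∧ 0 ≤ α32 ∧
      0 ≤ β10 ∧ 0 ≤ β20 ∧ 0 ≤ β21 ∧ 0 ≤ β30 ∧ 0 ≤ β31 ∧ 0 ≤ β32 ∧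
      α10 = 1 ∧ α20 + α21 = 1 ∧ α30 + α31 + α32 = 1 ∧
      (0 < β10 → α10 > (3/4) * β10) ∧
      (0 < β20 → α20 > (3/4) * β20) ∧
      (0 < β21 → α21 > (3/4) * β21) ∧
      (0 < β30 → α30 > (3/4) * β30) ∧
      (0 < β31 → α31 > (3/4) * β31) ∧
      (0 < β32 → α32 > (3/4) * β32) ∧
      -- Butcher coefficients and abscissas
      (let a21 := β10
       let a31 := β20 + α21 * β10
       let a32 := β21
       let b1 := α32 * α21 * β10 + α31 * β10 + α32 * β20 + β30
       let b2 := α32 * β21 + β31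
       let b3 := β32
       let c2 := a21
       let c3 := a31 + a32
       -- non-decreasing abscissas 0 = c1 ≤ c2 ≤ c3
       0 ≤ c2 ∧ c2 ≤ c3 ∧
       -- third-order conditions
       b1 + b2 + b3 = 1 ∧
       b2 * c2 + b3 * c3 = 1/2 ∧
       b2 * c2 ^ 2 + b3 * c3 ^ 2 = 1/3 ∧
       b3 * a32 * c2 = 1/6) := by
  rintro ⟨α10, α20, α21, α30, α31, α32, β10, β20, β21, β30, β31, β32,
    hα10, hα20, hα21, hα30, hα31, hα32, hβ10, hβ20, hβ21, hβ30, hβ31, hβ32,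
    e10, e2, e3, s10, s20, s21, s30, s31, s32, hc2, hc23, h1, h2, h3, h4⟩
  -- names for compound quantities
  obtain ⟨c3, hc3def⟩ : ∃ x : ℝ, x = β20 + α21 * β10 + β21 := ⟨_, rfl⟩
  obtain ⟨B2, hB2def⟩ : ∃ x : ℝ, x = α32 * β21 + β31 := ⟨_, rfl⟩
  rw [← hc3def] at hc23 h2 h3
  rw [← hB2def] at h2 h3
  -- positivity of β10, β21, β32 from h4
  have hp : 0 < β10 := by nlinarith [h4, mul_nonneg hβ32 hβ21]
  have hr : 0 < β21 := by nlinarith [h4, mul_nonneg hβ32 hβ10]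
  have hu : 0 < β32 := by nlinarith [h4, mul_nonneg hβ21 hβ10]
  -- strict SSP inequalities
  have hA : α21 > (3/4) * β21 := s21 hr
  have hW : α32 > (3/4) * β32 := s32 hu
  -- key inequalities
  have I1 : (3/4) * (β32 * β21) < B2 := by
    nlinarith [mul_lt_mul_of_pos_right hW hr, hβ31]
  have I2 : β21 * (4 + 3 * β10) < 4 * c3 := by
    rw [hc3def]
    nlinarith [mul_lt_mul_of_pos_right hA hp, hβ20]
  -- derived equalities
  have E1 : β32 * c3 * (c3 - β10) = 1/3 - β10 / 2 := by linear_combination h3 - β10 * h2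
  have E2 : B2 * β10 * (c3 - β10) = c3 / 2 - 1/3 := by linear_combination c3 * h2 - h3
  rcases eq_or_lt_of_le hc23 with hD | hD
  · -- c2 = c3 case
    rw [← hD] at E1 E2 h2 h3 I2
    have hx : β10 = 2/3 := by nlinarith [E1]
    rw [hx] at h2 h4 I2
    nlinarith [h4, h2, I1, I2, hu, hr, mul_pos hu hr]
  · -- c2 < c3 case
    have hDpos : 0 < c3 - β10 := by linarith
    -- from I1 : 1/8 < B2 * β10, then times (c3 - β10) with E2
    have J1 : 1/8 < B2 * β10 := by nlinarith [mul_lt_mul_of_pos_right I1 hp, h4]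
    have M : (1/8) * (c3 - β10) < c3 / 2 - 1/3 := by
      calc (1/8) * (c3 - β10) < (B2 * β10) * (c3 - β10) :=
            mul_lt_mul_of_pos_right J1 hDpos
        _ = c3 / 2 - 1/3 := by linear_combination E2
    -- from I2 times β32*β10, use h4, then times (c3-β10), use E1
    have K1 : (1/6) * (4 + 3 * β10) < 4 * (β32 * β10 * c3) := by
      nlinarith [mul_lt_mul_of_pos_left I2 (mul_pos hu hp), h4]
    have L : (1/6) * (4 + 3 * β10) * (c3 - β10) < 4 * β10 * (1/3 - β10 / 2) := by
      calc (1/6) * (4 + 3 * β10) * (c3 - β10)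
          < 4 * (β32 * β10 * c3) * (c3 - β10) := mul_lt_mul_of_pos_right K1 hDpos
        _ = 4 * β10 * (1/3 - β10 / 2) := by linear_combination 4 * β10 * E1
    have h43 : (0:ℝ) < 4 + 3 * β10 := by linarith
    have M' : (0:ℝ) < 3 * c3 - 8/3 + β10 := by linarith
    linarith [L, mul_pos h43 M', sq_nonneg (3 * β10 - 2)]
end

section
/- In the equal-abscissa case of the 3-stage 3rd order SSP method with c_2 = c_3 = 2/3, Butcher coefficients a_{21} = 2/3, a_{31} = 2/3 − 1/(4ω), a_{32} = 1/(4ω), b = (1/4, 3/4 − ω, ω): the conditions b_2 > (3/4)·b_3·a_{32} and a_{31} > (3/4)·a_{32}·a_{21} (with ω > 0) are contradictory — the first forces ω < 9/16 and the second forces ω > 9/16. -/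
/-- Equal-abscissa case `c_2 = c_3 = 2/3` of the 3-stage third-order SSP method:
with `a_{21} = 2/3`, `a_{31} = 2/3 − 1/(4ω)`, `a_{32} = 1/(4ω)`,
`b = (1/4, 3/4 − ω, ω)`, the condition `b_2 > (3/4)·b_3·a_{32}` forces
`ω < 9/16`, the condition `a_{31} > (3/4)·a_{32}·a_{21}` forces `ω > 9/16`,
and hence the two conditions are contradictory. -/
theorem equal_abscissa_case_contradiction (ω : ℝ) (hω : 0 < ω) :
    ((3/4 - ω > (3/4) * ω * (1/(4*ω))) → ω < 9/16) ∧
    ((2/3 - 1/(4*ω) > (3/4) * (1/(4*ω)) * (2/3)) → ω > 9/16) ∧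
    ¬ ((3/4 - ω > (3/4) * ω * (1/(4*ω))) ∧
       (2/3 - 1/(4*ω) > (3/4) * (1/(4*ω)) * (2/3))) := by
  have h4 : (0:ℝ) < 4*ω := by linarith
  have key : (1/(4*ω)) * (4*ω) = 1 := one_div_mul_cancel (ne_of_gt h4)
  have h1 : (3/4 - ω > (3/4) * ω * (1/(4*ω))) → ω < 9/16 := by
    intro h; nlinarith [h, key]
  have h2 : (2/3 - 1/(4*ω) > (3/4) * (1/(4*ω)) * (2/3)) → ω > 9/16 := by
    intro h; nlinarith [h, key, mul_pos h4 h4]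
  exact ⟨h1, h2, fun ⟨a, b⟩ => absurd (h1 a) (not_lt.mpr (le_of_lt (h2 b)))⟩
end
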